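/- Let (V,g) be an n-dimensional (n ≥ 3) real vector space with a nondegenerate symmetric bilinear form g, let A be a symmetric bilinear form on V with rank(A − α·g) = 1 for some α ∈ ℝ. Then A² − (tr(A²)/n)·g = (tr(A) − (n−2)α)·(A − (tr(A)/n)·g). -/

import Mathlib

variable {V : Type*} [AddCommGroup V] [Module ℝ V]

/-- Kulkarni–Nomizu product of two (0,2)-tensors. -/
def kn (A B : V → V → ℝ) : V → V → V → V → ℝ := fun x1 x2 x3 x4 =>
  A x1 x4 * B x2 x3 + A x2 x3 * B x1 x4 - A x1 x3 * B x2 x4 - A x2 x4 * B x1 x3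

/-- The endomorphism `(X ∧_A Y)Z = A(Y,Z)X − A(X,Z)Y`. -/
def wedgeV (A : V → V → ℝ) (x y z : V) : V := A y z • x - A x z • y

/-- Tachibana tensor `Q(A,T)` of a (0,2)-tensor `A` and a (0,4)-tensor `T`. -/
def Q4 (A : V → V → ℝ) (T : V → V → V → V → ℝ) : V → V → V → V → V → V → ℝ :=
  fun x1 x2 x3 x4 x y =>
    -(T (wedgeV A x y x1) x2 x3 x4) - T x1 (wedgeV A x y x2) x3 x4
      - T x1 x2 (wedgeV A x y x3) x4 - T x1 x2 x3 (wedgeV A x y x4)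

/-- trace of a ℝ-endomorphism of ℝ is its value at 1 -/
lemma trace_real_endo (h : ℝ →ₗ[ℝ] ℝ) : LinearMap.trace ℝ ℝ h = h 1 := by
  have : h = (h 1) • LinearMap.id := by
    ext
    simp [← h.map_smul, mul_comm]
  rw [this]
  simp [Module.finrank_self]

/-- if `rank(A − α·g) = 1` then
`A² − (tr(A²)/n)·g = (tr(A) − (n−2)α)·(A − (tr(A)/n)·g)`. -/
theorem stmt_11 {V : Type*} [AddCommGroup V] [Module ℝ V] [FiniteDimensional ℝ V]
    (n : ℕ) (hn3 : 3 ≤ n) (hdim : Module.finrank ℝ V = n)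
    (g A : V →ₗ[ℝ] V →ₗ[ℝ] ℝ)
    (hg : ∀ x y, g x y = g y x)
    (hgnd : ∀ x : V, (∀ y : V, g x y = 0) → x = 0)
    (hA : ∀ x y, A x y = A y x)
    (a : V →ₗ[ℝ] V) (ha : ∀ x y, g (a x) y = A x y)
    (α : ℝ)
    (hrank : Module.finrank ℝ (LinearMap.range (a - α • (LinearMap.id : V →ₗ[ℝ] V))) = 1) :
    ∀ x y : V,
      A (a x) y - (LinearMap.trace ℝ V (a ∘ₗ a) / (n : ℝ)) * g x y
        = (LinearMap.trace ℝ V a - ((n : ℝ) - 2) * α)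
            * (A x y - (LinearMap.trace ℝ V a / (n : ℝ)) * g x y) := by
  set b : V →ₗ[ℝ] V := a - α • (LinearMap.id : V →ₗ[ℝ] V) with hbdef
  have hab : ∀ z : V, a z = b z + α • z := by
    intro z; simp [hbdef]
  -- rank-one structure of b
  obtain ⟨v0, hv0ne, hv0⟩ := finrank_eq_one_iff'.mp hrank
  set v : V := (v0 : V) with hvdef
  have hvne : v ≠ 0 := fun h => hv0ne (Subtype.ext h)
  have hspan : ∀ z : V, ∃ c : ℝ, b z = c • v := by
    intro z
    obtain ⟨c, hc⟩ := hv0 ⟨b z, LinearMap.mem_range_self b z⟩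
    exact ⟨c, by simpa using congrArg Subtype.val hc.symm⟩
  -- a functional f with f v = 1
  obtain ⟨w, hw⟩ : ∃ w : V, g v w ≠ 0 := by
    by_contra h
    push_neg at h
    exact hvne (hgnd v h)
  set f : V →ₗ[ℝ] ℝ := (g v w)⁻¹ • (g.flip w) with hfdef
  have hfv : f v = 1 := by
    simp [hfdef, LinearMap.flip_apply]
    field_simp
  have hbf : ∀ z : V, b z = f (b z) • v := by
    intro z
    obtain ⟨c, hc⟩ := hspan z
    rw [hc, map_smul, hfv]
    simp
  set c : ℝ := f (b v) with hcdef
  -- b ∘ b = c • b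
  have hbb : ∀ z : V, b (b z) = c • b z := by
    intro z
    calc b (b z) = b (f (b z) • v) := by rw [← hbf z]
    _ = f (b z) • b v := by rw [map_smul]
    _ = f (b z) • (c • v) := by rw [hcdef, ← hbf v]
    _ = c • (f (b z) • v) := by rw [smul_comm]
    _ = c • b z := by rw [← hbf z]
  -- trace of b is c
  have htrb : LinearMap.trace ℝ V b = c := by
    have hb : b = (LinearMap.toSpanSingleton ℝ V v) ∘ₗ (f ∘ₗ b) := by
      ext z
      simp only [LinearMap.comp_apply, LinearMap.toSpanSingleton_apply]
      exact hbf z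
    rw [hb, LinearMap.trace_comp_comm', trace_real_endo]
    simp only [LinearMap.comp_apply, LinearMap.toSpanSingleton_apply, one_smul]
    exact hcdef.symm
  have hn0 : (n : ℝ) ≠ 0 := by positivity
  -- traces of a and a∘a
  have htra : LinearMap.trace ℝ V a = c + α * n := by
    have : a = b + α • (LinearMap.id : V →ₗ[ℝ] V) := by ext z; simp [hab z]
    rw [this, map_add, htrb, map_smul, LinearMap.trace_id, hdim, smul_eq_mul]
  have htraa : LinearMap.trace ℝ V (a ∘ₗ a) = (c + 2 * α) * c + α ^ 2 * n := by
    have haa : a ∘ₗ a = (c + 2 * α) • b + (α ^ 2) • (LinearMap.id : V →ₗ[ℝ] V) := by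
      ext z
      simp only [LinearMap.comp_apply, LinearMap.add_apply, LinearMap.smul_apply,
        LinearMap.id_apply]
      rw [hab (a z), hab z, map_add, map_smul, hbb z]
      module
    rw [haa, map_add, map_smul, map_smul, htrb, LinearMap.trace_id, hdim,
      smul_eq_mul, smul_eq_mul]
  intro x y
  have hAxy : A x y = g (b x) y + α * g x y := by
    rw [← ha x y, hab x, map_add, LinearMap.add_apply, map_smul]
    simp
  have hAax : A (a x) y = (c + 2 * α) * g (b x) y + α ^ 2 * g x y := by
    rw [← ha (a x) y, hab (a x), hab x, map_add, map_smul, map_add, map_smul, hbb x]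
    simp only [map_add, map_smul, LinearMap.add_apply, LinearMap.smul_apply, smul_eq_mul]
    ring
  rw [hAax, hAxy, htra, htraa]
  field_simp
  ring
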